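/- On Z₁ := ℝⁿ × ℝⁿ × ℝ₊ declare (x₁, ẋ₁, s₁) and (x₂, ẋ₂, s₂) composable iff x₂ = s₁·x₁ − (2/(1+‖x₁‖²))·ẋ₁, and in that case define their product m̃((x₁, ẋ₁, s₁), (x₂, ẋ₂, s₂)) := (x₁, s₂·ẋ₁ + ((1+‖x₁‖²)/(1+‖x₂‖²))·ẋ₂, s₁·s₂). Then composition is associative: if (x₁, ẋ₁, s₁), (x₂, ẋ₂, s₂) are composable and (x₂, ẋ₂, s₂), (x₃, ẋ₃, s₃) are composable, then m̃((x₁,ẋ₁,s₁),(x₂,ẋ₂,s₂)) is composable with (x₃,ẋ₃,s₃), (x₁,ẋ₁,s₁) is composable with m̃((x₂,ẋ₂,s₂),(x₃,ẋ₃,s₃)), and m̃(m̃((x₁,ẋ₁,s₁),(x₂,ẋ₂,s₂)),(x₃,ẋ₃,s₃)) = m̃((x₁,ẋ₁,s₁), m̃((x₂,ẋ₂,s₂),(x₃,ẋ₃,s₃))). -/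
import Mathlib


/-- Composability in the groupoid `Z₁ = ℝⁿ × ℝⁿ × ℝ₊` of formula (27):
`(x₁, ẋ₁, s₁)` and `(x₂, ẋ₂, s₂)` are composable iff `x₂ = s₁·x₁ − (2/(1+‖x₁‖²))·ẋ₁`. -/
noncomputable def Zcomp {n : ℕ}
    (z₁ z₂ : EuclideanSpace ℝ (Fin n) × EuclideanSpace ℝ (Fin n) × ℝ) : Prop :=
  z₂.1 = z₁.2.2 • z₁.1 - (2 / (1 + ‖z₁.1‖ ^ 2)) • z₁.2.1

/-- The groupoid multiplication of formula (27) on `Z₁ = ℝⁿ × ℝⁿ × ℝ₊`. -/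
noncomputable def Zmul {n : ℕ}
    (z₁ z₂ : EuclideanSpace ℝ (Fin n) × EuclideanSpace ℝ (Fin n) × ℝ) :
    EuclideanSpace ℝ (Fin n) × EuclideanSpace ℝ (Fin n) × ℝ :=
  (z₁.1, z₂.2.2 • z₁.2.1 + ((1 + ‖z₁.1‖ ^ 2) / (1 + ‖z₂.1‖ ^ 2)) • z₂.2.1,
    z₁.2.2 * z₂.2.2)

/-- The multiplication of formula (27) is associative: if `(x₁,ẋ₁,s₁), (x₂,ẋ₂,s₂)` are
composable and `(x₂,ẋ₂,s₂), (x₃,ẋ₃,s₃)` are composable, then the two possible triple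
products are defined and equal. -/
theorem stmt10 {n : ℕ} (x₁ v₁ x₂ v₂ x₃ v₃ : EuclideanSpace ℝ (Fin n))
    (s₁ s₂ s₃ : ℝ) (hs₁ : 0 < s₁) (hs₂ : 0 < s₂) (hs₃ : 0 < s₃)
    (h12 : Zcomp (x₁, v₁, s₁) (x₂, v₂, s₂))
    (h23 : Zcomp (x₂, v₂, s₂) (x₃, v₃, s₃)) :
    Zcomp (Zmul (x₁, v₁, s₁) (x₂, v₂, s₂)) (x₃, v₃, s₃) ∧
    Zcomp (x₁, v₁, s₁) (Zmul (x₂, v₂, s₂) (x₃, v₃, s₃)) ∧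
    Zmul (Zmul (x₁, v₁, s₁) (x₂, v₂, s₂)) (x₃, v₃, s₃) =
      Zmul (x₁, v₁, s₁) (Zmul (x₂, v₂, s₂) (x₃, v₃, s₃)) := by
  have h1 : (1:ℝ) + ‖x₁‖^2 ≠ 0 := by positivity
  have h2 : (1:ℝ) + ‖x₂‖^2 ≠ 0 := by positivity
  have h3 : (1:ℝ) + ‖x₃‖^2 ≠ 0 := by positivity
  simp only [Zcomp, Zmul] at *
  refine ⟨?_, h12, ?_⟩
  · set A := 1 + ‖x₂‖ ^ 2 with hA
    rw [h23, h12]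
    match_scalars <;> field_simp
    all_goals first
      | ring1
      | (left; ring1)
  · refine Prod.ext rfl (Prod.ext ?_ (mul_assoc s₁ s₂ s₃))
    match_scalars <;> field_simp
    all_goals first
      | ring1
      | (left; ring1)
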